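/- Let k be an integer with |k| ≥ 2 and let g(t) = ((t^k − 1)/(t − 1))² · f(t^k) where f ∈ ℤ[t, t⁻¹] is a Laurent polynomial with f(1) = 1 and f(t) = f(t⁻¹). If deg g ≥ 2, then the trace (sum of roots) of the normalized polynomial associated to g equals −2; in particular g(t) is not of the form t^{n} − t^{n−1} + ⋯ − t^{−n+1} + t^{−n} up to units, and hence does not satisfy the Tange/Hedden–Watson condition for lens space surgeries. -/

import Mathlib

open Polynomial


lemma coeff_geomS (K : Type*) [Field K] (k n : ℕ) :
    (∑ i ∈ Finset.range k, (X : K[X]) ^ i).coeff n = if n < k then 1 else 0 := by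
  rw [finset_sum_coeff]
  simp only [coeff_X_pow]
  simp only [eq_comm (a := n)]
  rw [Finset.sum_ite_eq' (Finset.range k) n (fun _ => (1 : K))]
  simp [Finset.mem_range]

lemma natDegree_geomS (K : Type*) [Field K] (k : ℕ) (hk : 1 ≤ k) :
    (∑ i ∈ Finset.range k, (X : K[X]) ^ i).natDegree = k - 1 := by
  apply le_antisymm
  · apply natDegree_le_iff_coeff_eq_zero.2
    intro n hn
    rw [coeff_geomS]
    rw [if_neg]
    omega
  · apply le_natDegree_of_ne_zero
    rw [coeff_geomS, if_pos (by omega)]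
    exact one_ne_zero

lemma monic_geomS (K : Type*) [Field K] (k : ℕ) (hk : 1 ≤ k) :
    (∑ i ∈ Finset.range k, (X : K[X]) ^ i).Monic :=
  Polynomial.Monic.geom_sum monic_X (by simp) (by omega)

lemma nextCoeff_geomS (K : Type*) [Field K] (k : ℕ) (hk : 2 ≤ k) :
    (∑ i ∈ Finset.range k, (X : K[X]) ^ i).nextCoeff = 1 := by
  rw [nextCoeff, natDegree_geomS K k (by omega), if_neg (by omega), coeff_geomS,
    if_pos (by omega)]

lemma nextCoeff_mul_C' {K : Type*} [Field K] (p : K[X]) {a : K} (ha : a ≠ 0) :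
    (p * C a).nextCoeff = p.nextCoeff * a := by
  rw [nextCoeff, nextCoeff, natDegree_mul_C ha]
  split_ifs <;> simp [coeff_mul_C]

lemma coeff_TangeT (K : Type*) [Field K] (N n : ℕ) :
    (∑ j ∈ Finset.range N, C ((-1 : K) ^ j) * X ^ j).coeff n
      = if n < N then (-1) ^ n else 0 := by
  rw [finset_sum_coeff]
  simp only [coeff_C_mul, coeff_X_pow]
  simp only [eq_comm (a := n), mul_ite, mul_one, mul_zero]
  rw [Finset.sum_ite_eq' (Finset.range N) n (fun j => ((-1 : K) ^ j))]
  simp [Finset.mem_range]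

lemma tange_roots_sum (n : ℕ) (hn : 1 ≤ n) :
    ((∑ j ∈ Finset.range (2 * n + 1), C ((-1 : ℤ) ^ j) * X ^ j).map
      (Int.castRingHom ℂ)).roots.sum = 1 := by
  have hmap : (∑ j ∈ Finset.range (2 * n + 1), C ((-1 : ℤ) ^ j) * X ^ j).map
      (Int.castRingHom ℂ) = ∑ j ∈ Finset.range (2 * n + 1), C ((-1 : ℂ) ^ j) * X ^ j := by
    simp [Polynomial.map_sum]
  set T : ℂ[X] := ∑ j ∈ Finset.range (2 * n + 1), C ((-1 : ℂ) ^ j) * X ^ j with hT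
  have hdegT : T.natDegree = 2 * n := by
    apply le_antisymm
    · apply natDegree_le_iff_coeff_eq_zero.2
      intro m hm
      rw [hT, coeff_TangeT, if_neg (by omega)]
    · apply le_natDegree_of_ne_zero
      rw [hT, coeff_TangeT, if_pos (by omega)]
      simp [pow_mul]
  have hmonic : T.Monic := by
    rw [Monic, leadingCoeff, hdegT, hT, coeff_TangeT, if_pos (by omega)]
    simp [pow_mul]
  have hnext : T.nextCoeff = -1 := by
    rw [nextCoeff, hdegT, if_neg (by omega), hT, coeff_TangeT, if_pos (by omega)]
    exact Odd.neg_one_pow ⟨n - 1, by omega⟩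
  rw [hmap]
  have := (IsAlgClosed.splits T).nextCoeff_eq_neg_sum_roots_of_monic hmonic
  rw [hnext] at this
  exact (neg_inj.mp this).symm

/-- Corollary 6.14(2) of Kadokami (algebraic core): let `|k| ≥ 2` (represented by
`k : ℕ`, `k ≥ 2`, per the convention of replacing `k` by `|k|`) and let
`g(t) = ((t^k − 1)/(t − 1))²·f(t^k)` where `f ∈ ℤ[t,t⁻¹]` satisfies `f(1) = 1` and
`f(t) = f(t⁻¹)`.  Here `f` is represented by its normalized polynomial `q` (a unit
multiple `t^N·f(t)`), so `q` has nonzero constant term, palindromic coefficients,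
and `q(1) = 1`, and the normalized polynomial of `g` is
`G = (1 + t + ⋯ + t^{k−1})²·q(t^k)`.  If `deg G ≥ 2`, then the trace (sum of the
roots over `ℂ`) of `G` equals `−2`; in particular `G` is not of the Tange /
Hedden–Watson form `±(t^{2n} − t^{2n−1} + ⋯ − t + 1)` required for lens space
surgeries. -/
theorem satellite_trace_neg_two (k : ℕ) (hk : 2 ≤ k) (q : Polynomial ℤ)
    (hq0 : q.coeff 0 ≠ 0)
    (hsym : ∀ j ≤ q.natDegree, q.coeff j = q.coeff (q.natDegree - j))
    (h1 : q.eval 1 = 1)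
    (G : Polynomial ℤ)
    (hG : G = (∑ i ∈ Finset.range k, X ^ i) ^ 2 * Polynomial.expand ℤ k q)
    (hdeg : 2 ≤ G.natDegree) :
    (G.map (Int.castRingHom ℂ)).roots.sum = -2 ∧
    ∀ n : ℕ, 1 ≤ n →
      G ≠ (∑ j ∈ Finset.range (2 * n + 1), C ((-1 : ℤ) ^ j) * X ^ j) ∧
      G ≠ -(∑ j ∈ Finset.range (2 * n + 1), C ((-1 : ℤ) ^ j) * X ^ j) := by
  have hk0 : 0 < k := by omega
  set σ := Int.castRingHom ℂ with hσ
  have hσinj : Function.Injective σ := Int.cast_injective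
  have hqne : q ≠ 0 := fun h => hq0 (by simp [h])
  set qc : ℂ[X] := q.map σ with hqc
  have hqcne : qc ≠ 0 := (Polynomial.map_ne_zero_iff hσinj).2 hqne
  have hqcdeg : qc.natDegree = q.natDegree := natDegree_map_eq_of_injective hσinj q
  set Sc : ℂ[X] := ∑ i ∈ Finset.range k, X ^ i with hSc
  set Qc : ℂ[X] := Polynomial.expand ℂ k qc with hQc
  have hQcne : Qc ≠ 0 := by
    rw [hQc, Ne, Polynomial.expand_eq_zero hk0]; exact hqcne
  have hb : Qc.leadingCoeff ≠ 0 := leadingCoeff_ne_zero.2 hQcne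
  set Q' : ℂ[X] := Qc * C Qc.leadingCoeff⁻¹ with hQ'
  have hQ'monic : Q'.Monic := monic_mul_leadingCoeff_inv hQcne
  have hScmonic : Sc.Monic := monic_geomS ℂ k (by omega)
  have hGc : G.map σ = Sc ^ 2 * Qc := by
    rw [hG]
    simp only [Polynomial.map_mul, Polynomial.map_pow, Polynomial.map_sum,
      Polynomial.map_X, Polynomial.map_expand]
    rfl
  set p : ℂ[X] := Sc ^ 2 * Q' with hp
  have hpmonic : p.Monic := (hScmonic.pow 2).mul hQ'monic
  have hroots : p.roots = (G.map σ).roots := by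
    have : p = C Qc.leadingCoeff⁻¹ * (G.map σ) := by
      rw [hGc, hp, hQ']; ring
    rw [this, roots_C_mul _ (inv_ne_zero hb)]
  -- nextCoeff of Qc is zero
  have hQcnext : Qc.nextCoeff = 0 := by
    rcases Nat.eq_zero_or_pos q.natDegree with hm | hm
    · have : Qc.natDegree = 0 := by
        rw [hQc, natDegree_expand, hqcdeg, hm, zero_mul]
      rw [nextCoeff, if_pos this]
    · have hd : Qc.natDegree = q.natDegree * k := by
        rw [hQc, natDegree_expand, hqcdeg]
      have hge : 1 ≤ q.natDegree * k := Nat.one_le_iff_ne_zero.2 (by positivity)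
      rw [nextCoeff, if_neg (by omega), hd, hQc,
        Polynomial.coeff_expand hk0, if_neg]
      intro hdvd
      have h2 : k ∣ q.natDegree * k := dvd_mul_left k q.natDegree
      have h3 := Nat.dvd_sub h2 hdvd
      rw [show q.natDegree * k - (q.natDegree * k - 1) = 1 by omega] at h3
      have := Nat.le_of_dvd one_pos h3
      omega
  have hQ'next : Q'.nextCoeff = 0 := by
    rw [hQ', nextCoeff_mul_C' _ (inv_ne_zero hb), hQcnext, zero_mul]
  have hpnext : p.nextCoeff = 2 := by
    rw [hp, Monic.nextCoeff_mul (hScmonic.pow 2) hQ'monic, hQ'next,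
      Monic.nextCoeff_pow hScmonic, nextCoeff_geomS ℂ k hk]
    simp
  have hsum : (G.map σ).roots.sum = -2 := by
    have := (IsAlgClosed.splits p).nextCoeff_eq_neg_sum_roots_of_monic hpmonic
    rw [hpnext, hroots] at this
    exact neg_eq_iff_eq_neg.mp this.symm
  refine ⟨hsum, fun n hn => ⟨?_, ?_⟩⟩
  · intro hGT
    have := tange_roots_sum n hn
    rw [← hGT] at this
    rw [hsum] at this
    norm_num at this
  · intro hGT
    have h2 := tange_roots_sum n hn
    have : (G.map σ).roots.sum = 1 := by
      rw [hGT, Polynomial.map_neg]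
      rw [neg_eq_neg_one_mul, show ((-1 : ℂ[X]) = C (-1)) by simp,
        roots_C_mul _ (by norm_num : (-1 : ℂ) ≠ 0)]
      exact h2
    rw [hsum] at this
    norm_num at this
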